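/- Let 𝒞 be a function from real symmetric 2×2 matrices to real symmetric 2×2 matrices that is isotropic, i.e., 𝒞(O·A·Oᵀ) = O·𝒞(A)·Oᵀ for every real orthogonal 2×2 matrix O and every symmetric A. Then for every real symmetric 2×2 matrix A, the matrices 𝒞(A) and A commute: A·𝒞(A) = 𝒞(A)·A. -/

import Mathlib

open Matrix

noncomputable section

/-- Two 2×2 matrices with vanishing off-diagonal entries commute. -/
lemma offdiag_comm (M N : Matrix (Fin 2) (Fin 2) ℝ)
    (h1 : M 0 1 = 0) (h2 : M 1 0 = 0) (h3 : N 0 1 = 0) (h4 : N 1 0 = 0) :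
    M * N = N * M := by
  ext i j
  fin_cases i <;> fin_cases j <;>
    simp [Matrix.mul_apply, Fin.sum_univ_two, h1, h2, h3, h4, mul_comm]

/-- For an isotropic function `𝒞` from real symmetric 2×2 matrices to real symmetric
2×2 matrices, `𝒞(A)` commutes with `A` for every symmetric `A`. -/
theorem isotropic_commutes (C : Matrix (Fin 2) (Fin 2) ℝ → Matrix (Fin 2) (Fin 2) ℝ)
    (hsym : ∀ A : Matrix (Fin 2) (Fin 2) ℝ, A.IsSymm → (C A).IsSymm)
    (hiso : ∀ O : Matrix (Fin 2) (Fin 2) ℝ, O * Oᵀ = 1 → Oᵀ * O = 1 →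
      ∀ A : Matrix (Fin 2) (Fin 2) ℝ, A.IsSymm → C (O * A * Oᵀ) = O * C A * Oᵀ) :
    ∀ A : Matrix (Fin 2) (Fin 2) ℝ, A.IsSymm → A * C A = C A * A := by
  -- First: the result for matrices with vanishing off-diagonal entries.
  have key : ∀ D : Matrix (Fin 2) (Fin 2) ℝ, D.IsSymm → D 0 1 = 0 → D 1 0 = 0 →
      D * C D = C D * D := by
    intro D hD h01 h10
    set J : Matrix (Fin 2) (Fin 2) ℝ := !![1, 0; 0, -1] with hJ
    have hJT : Jᵀ = J := by
      ext i j; fin_cases i <;> fin_cases j <;> simp [hJ]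
    have hJ1 : J * Jᵀ = 1 := by
      rw [hJT]; ext i j; fin_cases i <;> fin_cases j <;>
        simp [hJ, Matrix.mul_apply, Fin.sum_univ_two, Matrix.one_apply]
    have hJ1' : Jᵀ * J = 1 := by rw [hJT]; rw [hJT] at hJ1; exact hJ1
    have hDfix : J * D * Jᵀ = D := by
      ext i j; fin_cases i <;> fin_cases j <;>
        simp [hJ, Matrix.mul_apply, Matrix.vecMul, dotProduct, Fin.sum_univ_two,
          Matrix.vecHead, Matrix.vecTail, h01, h10]
    have hC := hiso J hJ1 hJ1' D hD
    rw [hDfix] at hC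
    -- off-diagonal entries of C D vanish
    have hc01 : C D 0 1 = 0 := by
      have := congrFun (congrFun hC 0) 1
      simp [hJ, hJT, Matrix.mul_apply, Matrix.vecMul, dotProduct, Fin.sum_univ_two,
        Matrix.vecHead, Matrix.vecTail] at this
      linarith [this]
    have hc10 : C D 1 0 = 0 := by
      have := congrFun (congrFun hC 1) 0
      simp [hJ, hJT, Matrix.mul_apply, Matrix.vecMul, dotProduct, Fin.sum_univ_two,
        Matrix.vecHead, Matrix.vecTail] at this
      linarith [this]
    exact offdiag_comm D (C D) h01 h10 hc01 hc10
  intro A hA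
  have hH : A.IsHermitian := by
    rwa [Matrix.IsHermitian, Matrix.conjTranspose_eq_transpose_of_trivial]
  -- diagonalize A
  set U : Matrix (Fin 2) (Fin 2) ℝ := (hH.eigenvectorUnitary : Matrix (Fin 2) (Fin 2) ℝ)
    with hU
  have hUmem := hH.eigenvectorUnitary.2
  have hU1 : U * star U = 1 := (Matrix.mem_unitaryGroup_iff).mp hUmem
  have hU1' : star U * U = 1 := (Matrix.mem_unitaryGroup_iff').mp hUmem
  have hstar : star U = Uᵀ := Matrix.conjTranspose_eq_transpose_of_trivial U
  rw [hstar] at hU1 hU1'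
  set O : Matrix (Fin 2) (Fin 2) ℝ := Uᵀ with hO
  have hO1 : O * Oᵀ = 1 := by rw [hO, Matrix.transpose_transpose]; exact hU1'
  have hO1' : Oᵀ * O = 1 := by rw [hO, Matrix.transpose_transpose]; exact hU1
  set D : Matrix (Fin 2) (Fin 2) ℝ := O * A * Oᵀ with hDdef
  have hDsymm : D.IsSymm := by
    rw [Matrix.IsSymm, hDdef]
    rw [Matrix.transpose_mul, Matrix.transpose_mul, Matrix.transpose_transpose, hA.eq,
      mul_assoc]
  have hDeq : D = Matrix.diagonal (RCLike.ofReal ∘ hH.eigenvalues) := by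
    have := hH.conjStarAlgAut_star_eigenvectorUnitary
    rw [Unitary.conjStarAlgAut_star_apply] at this
    rw [hstar] at this
    rw [hDdef, hO, Matrix.transpose_transpose]
    exact this
  have hD01 : D 0 1 = 0 := by rw [hDeq]; simp [Matrix.diagonal_apply_ne]
  have hD10 : D 1 0 = 0 := by rw [hDeq]; simp [Matrix.diagonal_apply_ne]
  have hCD := hiso O hO1 hO1' A hA
  -- hCD : C (O * A * Oᵀ) = O * C A * Oᵀ, i.e. C D = O * C A * Oᵀ
  have hcomm := key D hDsymm hD01 hD10
  rw [← hDdef] at hCD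
  rw [hCD] at hcomm
  -- hcomm : (O*A*Oᵀ) * (O * C A * Oᵀ) = (O * C A * Oᵀ) * (O*A*Oᵀ)
  have hmid : ∀ X Y : Matrix (Fin 2) (Fin 2) ℝ,
      (O * X * Oᵀ) * (O * Y * Oᵀ) = O * (X * Y) * Oᵀ := by
    intro X Y
    calc (O * X * Oᵀ) * (O * Y * Oᵀ) = O * X * (Oᵀ * O) * Y * Oᵀ := by
          simp only [mul_assoc]
      _ = O * (X * Y) * Oᵀ := by rw [hO1']; simp only [mul_one, mul_assoc]
  rw [hDdef, hmid, hmid] at hcomm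
  have cancel : ∀ X : Matrix (Fin 2) (Fin 2) ℝ, Oᵀ * (O * X * Oᵀ) * O = X := by
    intro X
    have : Oᵀ * (O * X * Oᵀ) * O = (Oᵀ * O) * X * (Oᵀ * O) := by
      simp only [mul_assoc]
    rw [this, hO1', one_mul, mul_one]
  calc A * C A = Oᵀ * (O * (A * C A) * Oᵀ) * O := (cancel _).symm
    _ = Oᵀ * (O * (C A * A) * Oᵀ) * O := by rw [hcomm]
    _ = C A * A := cancel _
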